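/- Symmetric case simplification: assume in addition that μ and n are both invariant under the map x ↦ −x. Then the condition D_μ(∞) = G_μ(−∞) holds automatically, and for every y ≥ 0 one has ψ₊(y) = ψ₋(y) = ∫_{[0,y]} (2 · μ̄(s) · n([s,∞)))⁻¹ dμ(s). -/

import Mathlib

open MeasureTheory Filter
open scoped ENNReal Topology Classical

/-- Topological support of a Borel measure on ℝ. -/
def measSupport (μ : MeasureTheory.Measure ℝ) : Set ℝ :=
  {x | ∀ U : Set ℝ, IsOpen U → x ∈ U → 0 < μ U}

/-- `D_μ(y) = ∫_{[0,y]} n([s,∞))⁻¹ dμ(s)` for `y ≥ 0` (equal to `0` for `y < 0`). -/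
noncomputable def Dmu (μ n : MeasureTheory.Measure ℝ) (y : ℝ) : ℝ≥0∞ :=
  ∫⁻ s in Set.Icc (0 : ℝ) y, (n (Set.Ici s))⁻¹ ∂μ

/-- `G_μ(x) = ∫_{[x,0]} n((−∞,s])⁻¹ dμ(s)` for `x ≤ 0` (equal to `0` for `x > 0`). -/
noncomputable def Gmu (μ n : MeasureTheory.Measure ℝ) (x : ℝ) : ℝ≥0∞ :=
  ∫⁻ s in Set.Icc x (0 : ℝ), (n (Set.Iic s))⁻¹ ∂μ

/-- The set `{y ≥ 0 : D_μ(y) > v}`; its infimum is the right-continuous inverse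
`D_μ⁻¹(v)`, with `D_μ⁻¹(v) = ∞` when the set is empty. -/
def DinvSet (μ n : MeasureTheory.Measure ℝ) (v : ℝ≥0∞) : Set ℝ :=
  {y : ℝ | 0 ≤ y ∧ v < Dmu μ n y}

/-- The set `{x ≤ 0 : G_μ(x) > v}`; its supremum is the right-continuous inverse
`G_μ⁻¹(v)`, with `G_μ⁻¹(v) = −∞` when the set is empty. -/
def GinvSet (μ n : MeasureTheory.Measure ℝ) (v : ℝ≥0∞) : Set ℝ :=
  {x : ℝ | x ≤ 0 ∧ v < Gmu μ n x}

/-- `μ̄(D_μ⁻¹(v))`, with the convention `μ̄(∞) = 0`. -/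
noncomputable def mubarDinv (μ n : MeasureTheory.Measure ℝ) (v : ℝ≥0∞) : ℝ :=
  if (DinvSet μ n v).Nonempty then (μ (Set.Ici (sInf (DinvSet μ n v)))).toReal else 0

/-- `μ̄(G_μ⁻¹(v))`, with the convention `μ̄(−∞) = 1`. -/
noncomputable def mubarGinv (μ n : MeasureTheory.Measure ℝ) (v : ℝ≥0∞) : ℝ :=
  if (GinvSet μ n v).Nonempty then (μ (Set.Ici (sSup (GinvSet μ n v)))).toReal else 1

/-- `n([D_μ⁻¹(v),∞))`, with the convention that it is `0` when `D_μ⁻¹(v) = ∞`. -/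
noncomputable def nDinv (μ n : MeasureTheory.Measure ℝ) (v : ℝ≥0∞) : ℝ≥0∞ :=
  if (DinvSet μ n v).Nonempty then n (Set.Ici (sInf (DinvSet μ n v))) else 0

/-- `n((−∞,G_μ⁻¹(v)])`, with the convention that it is `0` when `G_μ⁻¹(v) = −∞`. -/
noncomputable def nGinv (μ n : MeasureTheory.Measure ℝ) (v : ℝ≥0∞) : ℝ≥0∞ :=
  if (GinvSet μ n v).Nonempty then n (Set.Iic (sSup (GinvSet μ n v))) else 0

/-- The integrand `[n([s,∞)) · (1 + μ̄(s) − μ̄(G_μ⁻¹(D_μ(s))))]⁻¹` of `ψ₊`. -/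
noncomputable def psiPlusIntegrand (μ n : MeasureTheory.Measure ℝ) (s : ℝ) : ℝ≥0∞ :=
  (n (Set.Ici s) *
    ENNReal.ofReal (1 + (μ (Set.Ici s)).toReal - mubarGinv μ n (Dmu μ n s)))⁻¹

/-- `ψ₊(y) = ∫_{[0,y]} [n([s,∞)) · (1 + μ̄(s) − μ̄(G_μ⁻¹(D_μ(s))))]⁻¹ dμ(s)`. -/
noncomputable def psiPlus (μ n : MeasureTheory.Measure ℝ) (y : ℝ) : ℝ≥0∞ :=
  ∫⁻ s in Set.Icc (0 : ℝ) y, psiPlusIntegrand μ n s ∂μ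

/-- The integrand `[n((−∞,s]) · (1 + μ̄(D_μ⁻¹(G_μ(s))) − μ̄(s))]⁻¹` of `ψ₋`. -/
noncomputable def psiMinusIntegrand (μ n : MeasureTheory.Measure ℝ) (s : ℝ) : ℝ≥0∞ :=
  (n (Set.Iic s) *
    ENNReal.ofReal (1 + mubarDinv μ n (Gmu μ n s) - (μ (Set.Ici s)).toReal))⁻¹

/-- `ψ₋(z) = ∫_{[−z,0]} [n((−∞,s]) · (1 + μ̄(D_μ⁻¹(G_μ(s))) − μ̄(s))]⁻¹ dμ(s)`. -/
noncomputable def psiMinus (μ n : MeasureTheory.Measure ℝ) (z : ℝ) : ℝ≥0∞ :=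
  ∫⁻ s in Set.Icc (-z) (0 : ℝ), psiMinusIntegrand μ n s ∂μ

/-- The set `{y ≥ 0 : ψ₊(y) ≥ l}` whose infimum is the left-continuous inverse `φ₊(l)`. -/
def phiPlusSet (μ n : MeasureTheory.Measure ℝ) (l : ℝ) : Set ℝ :=
  {y : ℝ | 0 ≤ y ∧ ENNReal.ofReal l ≤ psiPlus μ n y}

/-- The set `{z ≥ 0 : ψ₋(z) ≥ l}` whose infimum is the left-continuous inverse `φ₋(l)`. -/
def phiMinusSet (μ n : MeasureTheory.Measure ℝ) (l : ℝ) : Set ℝ :=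
  {z : ℝ | 0 ≤ z ∧ ENNReal.ofReal l ≤ psiMinus μ n z}

/-- `φ₊(l) = inf{y ≥ 0 : ψ₊(y) ≥ l}`. -/
noncomputable def phiPlus (μ n : MeasureTheory.Measure ℝ) (l : ℝ) : ℝ :=
  sInf (phiPlusSet μ n l)

/-- `φ₋(l) = inf{z ≥ 0 : ψ₋(z) ≥ l}`. -/
noncomputable def phiMinus (μ n : MeasureTheory.Measure ℝ) (l : ℝ) : ℝ :=
  sInf (phiMinusSet μ n l)

/-- `n([φ₊(l),∞))`, with the convention that it is `0` when `φ₊(l) = inf ∅ = ∞`. -/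
noncomputable def nPhiPlus (μ n : MeasureTheory.Measure ℝ) (l : ℝ) : ℝ≥0∞ :=
  if (phiPlusSet μ n l).Nonempty then n (Set.Ici (phiPlus μ n l)) else 0

/-- `n((−∞,−φ₋(l)])`, with the convention that it is `0` when `φ₋(l) = inf ∅ = ∞`. -/
noncomputable def nPhiMinus (μ n : MeasureTheory.Measure ℝ) (l : ℝ) : ℝ≥0∞ :=
  if (phiMinusSet μ n l).Nonempty then n (Set.Iic (-(phiMinus μ n l))) else 0

/-- `∫₀^L [n((−∞,−φ₋(s)]) + n([φ₊(s),∞))] ds` for an upper limit `L ∈ [0,∞]`. -/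
noncomputable def cutInt (μ n : MeasureTheory.Measure ℝ) (L : ℝ≥0∞) : ℝ≥0∞ :=
  ∫⁻ s in {s : ℝ | 0 < s ∧ ENNReal.ofReal s < L},
    (nPhiMinus μ n s + nPhiPlus μ n s)

/-- `exp(−a)` for `a ∈ [0,∞]`, with `exp(−∞) = 0`. -/
noncomputable def expNegE (a : ℝ≥0∞) : ℝ :=
  if a = ⊤ then 0 else Real.exp (-a.toReal)

/-- `ρ(l) = exp(−∫₀^l [n((−∞,−φ₋(s)]) + n([φ₊(s),∞))] ds)`. -/
noncomputable def rho (μ n : MeasureTheory.Measure ℝ) (l : ℝ) : ℝ≥0∞ :=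
  ENNReal.ofReal (expNegE (cutInt μ n (ENNReal.ofReal l)))

section SymmetricAux

variable {μ n : MeasureTheory.Measure ℝ}

private lemma nIci_meas : Measurable (fun u : ℝ => (n (Set.Ici u))⁻¹) := by
  have h : Antitone fun u : ℝ => n (Set.Ici u) :=
    fun a b hab => measure_mono (Set.Ici_subset_Ici.2 hab)
  exact h.measurable.inv

private lemma Dmu_mono : Monotone (Dmu μ n) := fun a b hab =>
  lintegral_mono_set (Set.Icc_subset_Icc_right hab)

private lemma Ioc_null (hnfin : ∀ t : ℝ, 0 < t → n (Set.Ici t) < ⊤) {s t : ℝ}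
    (hs : 0 ≤ s) (hst : s < t) (hfin : Dmu μ n s ≠ ⊤)
    (heq : Dmu μ n t = Dmu μ n s) : μ (Set.Ioc s t) = 0 := by
  have hdisj : Disjoint (Set.Icc (0:ℝ) s) (Set.Ioc s t) :=
    Set.disjoint_left.2 fun x hx hx' => absurd hx.2 (not_le.2 hx'.1)
  have hsplit : Dmu μ n t = Dmu μ n s + ∫⁻ u in Set.Ioc s t, (n (Set.Ici u))⁻¹ ∂μ := by
    unfold Dmu
    rw [← lintegral_union measurableSet_Ioc hdisj, Set.Icc_union_Ioc_eq_Icc hs hst.le]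
  have hI : ∫⁻ u in Set.Ioc s t, (n (Set.Ici u))⁻¹ ∂μ = 0 := by
    have h2 : Dmu μ n s + ∫⁻ u in Set.Ioc s t, (n (Set.Ici u))⁻¹ ∂μ = Dmu μ n s + 0 := by
      rw [add_zero, ← hsplit]; exact heq
    exact ((ENNReal.add_right_inj hfin).1 h2)
  have hae := (setLIntegral_eq_zero_iff measurableSet_Ioc (nIci_meas (n := n))).1 hI
  refine measure_eq_zero_iff_ae_notMem.2 (hae.mono fun x hx hmem => ?_)
  have hxpos : 0 < x := lt_of_le_of_lt hs hmem.1
  exact (ENNReal.inv_ne_zero.2 (hnfin x hxpos).ne) (hx hmem)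

private lemma Ico_null_of {s r : ℝ} (hμs : μ {s} = 0)
    (h : ∀ t : ℝ, s < t → t < r → μ (Set.Ioc s t) = 0) : μ (Set.Ico s r) = 0 := by
  have hsub : Set.Ico s r ⊆ {s} ∪ ⋃ q : ℚ,
      (if (q : ℝ) < r then Set.Ioc s (q : ℝ) else ∅) := by
    rintro x ⟨hx1, hx2⟩
    rcases eq_or_lt_of_le hx1 with rfl | hx
    · exact Set.mem_union_left _ rfl
    · obtain ⟨q, hq1, hq2⟩ := exists_rat_btwn hx2
      exact Set.mem_union_right _ (Set.mem_iUnion.2 ⟨q, by rw [if_pos hq2]; exact ⟨hx, hq1.le⟩⟩)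
  refine measure_mono_null hsub (measure_union_null hμs (measure_iUnion_null fun q => ?_))
  split_ifs with hq
  · rcases lt_or_ge s q with h1 | h1
    · exact h q h1 hq
    · rw [Set.Ioc_eq_empty (not_lt.2 h1)]; exact measure_empty
  · exact measure_empty

private lemma Ioi_null_of {s : ℝ}
    (h : ∀ t : ℝ, s < t → μ (Set.Ioc s t) = 0) : μ (Set.Ioi s) = 0 := by
  have hsub : Set.Ioi s ⊆ ⋃ q : ℚ, Set.Ioc s (q : ℝ) := fun x hx => by
    obtain ⟨q, hq⟩ := exists_rat_gt x
    exact Set.mem_iUnion.2 ⟨q, hx, hq.le⟩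
  refine measure_mono_null hsub (measure_iUnion_null fun q => ?_)
  rcases lt_or_ge s q with h1 | h1
  · exact h q h1
  · rw [Set.Ioc_eq_empty (not_lt.2 h1)]; exact measure_empty

private lemma DinvSet_lb {s : ℝ} :
    ∀ y ∈ DinvSet μ n (Dmu μ n s), s ≤ y := by
  rintro y ⟨hy0, hyv⟩
  by_contra h
  exact absurd hyv (not_lt.2 (Dmu_mono (le_of_not_ge h)))

private lemma measure_Ici_sInf [MeasureTheory.IsProbabilityMeasure μ]
    (hatomless : ∀ x : ℝ, μ {x} = 0)
    (hnfin : ∀ t : ℝ, 0 < t → n (Set.Ici t) < ⊤) {s : ℝ} (hs : 0 ≤ s)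
    (hne : (DinvSet μ n (Dmu μ n s)).Nonempty) :
    μ (Set.Ici (sInf (DinvSet μ n (Dmu μ n s)))) = μ (Set.Ici s) := by
  have hlb := DinvSet_lb (μ := μ) (n := n) (s := s)
  have hbdd : BddBelow (DinvSet μ n (Dmu μ n s)) := ⟨s, hlb⟩
  have hsr : s ≤ sInf (DinvSet μ n (Dmu μ n s)) := le_csInf hne hlb
  have hvfin : Dmu μ n s ≠ ⊤ := by
    obtain ⟨y, hy0, hyv⟩ := hne
    exact (lt_of_lt_of_le hyv le_top).ne
  have hIoc : ∀ t : ℝ, s < t → t < sInf (DinvSet μ n (Dmu μ n s)) →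
      μ (Set.Ioc s t) = 0 := by
    intro t hst htr
    have htS : t ∉ DinvSet μ n (Dmu μ n s) :=
      fun hmem => absurd (csInf_le hbdd hmem) (not_le.2 htr)
    have hle : Dmu μ n t ≤ Dmu μ n s := by
      by_contra hlt
      exact htS ⟨hs.trans hst.le, not_le.1 hlt⟩
    exact Ioc_null hnfin hs hst hvfin (le_antisymm hle (Dmu_mono hst.le))
  have hIco : μ (Set.Ico s (sInf (DinvSet μ n (Dmu μ n s)))) = 0 :=
    Ico_null_of (hatomless s) hIoc
  refine le_antisymm (measure_mono (Set.Ici_subset_Ici.2 hsr)) ?_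
  calc μ (Set.Ici s)
      = μ (Set.Ico s (sInf (DinvSet μ n (Dmu μ n s))) ∪
          Set.Ici (sInf (DinvSet μ n (Dmu μ n s)))) := by
        rw [Set.Ico_union_Ici_eq_Ici hsr]
    _ ≤ μ (Set.Ico s (sInf (DinvSet μ n (Dmu μ n s)))) +
          μ (Set.Ici (sInf (DinvSet μ n (Dmu μ n s)))) := measure_union_le _ _
    _ = μ (Set.Ici (sInf (DinvSet μ n (Dmu μ n s)))) := by rw [hIco, zero_add]

private lemma Dmu_empty_case [MeasureTheory.IsProbabilityMeasure μ]
    (hatomless : ∀ x : ℝ, μ {x} = 0)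
    (hnfin : ∀ t : ℝ, 0 < t → n (Set.Ici t) < ⊤) {s : ℝ} (hs : 0 ≤ s)
    (hemp : ¬ (DinvSet μ n (Dmu μ n s)).Nonempty) (hn : n (Set.Ici s) ≠ 0) :
    μ (Set.Ici s) = 0 := by
  have hvfin : Dmu μ n s ≠ ⊤ := by
    have hb : Dmu μ n s ≤ (n (Set.Ici s))⁻¹ * μ (Set.Icc 0 s) := by
      calc Dmu μ n s
          ≤ ∫⁻ _ in Set.Icc (0:ℝ) s, (n (Set.Ici s))⁻¹ ∂μ :=
            setLIntegral_mono measurable_const fun u hu =>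
              ENNReal.inv_le_inv.2 (measure_mono (Set.Ici_subset_Ici.2 hu.2))
        _ = (n (Set.Ici s))⁻¹ * μ (Set.Icc 0 s) := setLIntegral_const _ _
    exact ne_top_of_le_ne_top
      (ENNReal.mul_ne_top (ENNReal.inv_ne_top.2 hn) (measure_ne_top μ _)) hb
  have hIoc : ∀ t : ℝ, s < t → μ (Set.Ioc s t) = 0 := by
    intro t hst
    have hle : Dmu μ n t ≤ Dmu μ n s := by
      by_contra hlt
      exact hemp ⟨t, hs.trans hst.le, not_le.1 hlt⟩
    exact Ioc_null hnfin hs hst hvfin (le_antisymm hle (Dmu_mono hst.le))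
  have hIoi := Ioi_null_of hIoc
  have hle : μ (Set.Ici s) ≤ μ {s} + μ (Set.Ioi s) := by
    calc μ (Set.Ici s) = μ ({s} ∪ Set.Ioi s) := by
          rw [Set.singleton_union, Set.Ioi_insert]
      _ ≤ _ := measure_union_le _ _
  rw [hatomless s, hIoi, add_zero] at hle
  exact le_zero_iff.1 hle

private lemma map_neg_Ici' {m : MeasureTheory.Measure ℝ}
    (hsym : MeasureTheory.Measure.map (fun x : ℝ => -x) m = m) (t : ℝ) :
    m (Set.Ici t) = m (Set.Iic (-t)) := by
  conv_lhs => rw [← hsym]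
  rw [MeasureTheory.Measure.map_apply measurable_neg measurableSet_Ici]
  congr 1
  ext x
  simp only [Set.mem_preimage, Set.mem_Ici, Set.mem_Iic, le_neg]

private lemma Gmu_eq_Dmu (hμsym : MeasureTheory.Measure.map (fun x : ℝ => -x) μ = μ)
    (hnsym : MeasureTheory.Measure.map (fun x : ℝ => -x) n = n) (x : ℝ) :
    Gmu μ n x = Dmu μ n (-x) := by
  have hg : Measurable fun s : ℝ => (n (Set.Iic s))⁻¹ := by
    have h : Monotone fun s : ℝ => n (Set.Iic s) :=
      fun a b hab => measure_mono (Set.Iic_subset_Iic.2 hab)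
    exact h.measurable.inv
  have hpre : (fun y : ℝ => -y) ⁻¹' Set.Icc x 0 = Set.Icc 0 (-x) := by
    ext t
    simp only [Set.mem_preimage, Set.mem_Icc]
    constructor
    · rintro ⟨h1, h2⟩; exact ⟨neg_nonpos.1 h2, le_neg.1 h1⟩
    · rintro ⟨h1, h2⟩; exact ⟨le_neg.2 h2, neg_nonpos.2 h1⟩
  calc Gmu μ n x
      = ∫⁻ s in Set.Icc x 0, (n (Set.Iic s))⁻¹
          ∂(MeasureTheory.Measure.map (fun y : ℝ => -y) μ) := by rw [hμsym]; rfl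
    _ = ∫⁻ t in (fun y : ℝ => -y) ⁻¹' Set.Icc x 0, (n (Set.Iic (-t)))⁻¹ ∂μ :=
        setLIntegral_map measurableSet_Icc hg measurable_neg
    _ = Dmu μ n (-x) := by
        unfold Dmu
        rw [hpre]
        exact lintegral_congr fun t => by rw [map_neg_Ici' hnsym t]

private lemma Iic_toReal [MeasureTheory.IsProbabilityMeasure μ]
    (hatomless : ∀ x : ℝ, μ {x} = 0) (t : ℝ) :
    (μ (Set.Iic t)).toReal = 1 - (μ (Set.Ici t)).toReal := by
  have h : μ (Set.Iic t) + μ (Set.Ici t) = 1 := by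
    have h2 := measure_union_add_inter (μ := μ) (Set.Iic t) (measurableSet_Ici (a := t))
    rw [Set.Iic_union_Ici, Set.Iic_inter_Ici, Set.Icc_self, measure_univ,
      hatomless t, add_zero] at h2
    exact h2.symm
  have h1 := measure_ne_top μ (Set.Iic t)
  have h2' := measure_ne_top μ (Set.Ici t)
  have h3 := congrArg ENNReal.toReal h
  rw [ENNReal.toReal_add h1 h2', ENNReal.toReal_one] at h3
  linarith

private lemma plus_integrand_eq [MeasureTheory.IsProbabilityMeasure μ]
    (hatomless : ∀ x : ℝ, μ {x} = 0)
    (hnfin : ∀ t : ℝ, 0 < t → n (Set.Ici t) < ⊤)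
    (hμsym : MeasureTheory.Measure.map (fun x : ℝ => -x) μ = μ)
    (hnsym : MeasureTheory.Measure.map (fun x : ℝ => -x) n = n)
    {s : ℝ} (hs : 0 ≤ s) :
    psiPlusIntegrand μ n s = (2 * μ (Set.Ici s) * n (Set.Ici s))⁻¹ := by
  have hGD : ∀ x : ℝ, x ∈ GinvSet μ n (Dmu μ n s) ↔ -x ∈ DinvSet μ n (Dmu μ n s) := by
    intro x
    show (x ≤ 0 ∧ Dmu μ n s < Gmu μ n x) ↔ (0 ≤ -x ∧ Dmu μ n s < Dmu μ n (-x))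
    rw [Gmu_eq_Dmu hμsym hnsym x, neg_nonneg]
  have hSetEq : GinvSet μ n (Dmu μ n s) = -(DinvSet μ n (Dmu μ n s)) :=
    Set.ext fun x => (hGD x).trans (Set.mem_neg).symm
  have hSup : sSup (GinvSet μ n (Dmu μ n s)) = -sInf (DinvSet μ n (Dmu μ n s)) := by
    rw [hSetEq, Real.sInf_def, neg_neg]
  have hNe : (GinvSet μ n (Dmu μ n s)).Nonempty ↔ (DinvSet μ n (Dmu μ n s)).Nonempty := by
    rw [hSetEq]; exact Set.nonempty_neg
  by_cases hne : (DinvSet μ n (Dmu μ n s)).Nonempty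
  · have hkey := measure_Ici_sInf hatomless hnfin hs hne
    have hmub : mubarGinv μ n (Dmu μ n s) = 1 - (μ (Set.Ici s)).toReal := by
      rw [mubarGinv, if_pos (hNe.2 hne), hSup]
      have hIcineg : μ (Set.Ici (-sInf (DinvSet μ n (Dmu μ n s))))
          = μ (Set.Iic (sInf (DinvSet μ n (Dmu μ n s)))) := by
        rw [map_neg_Ici' hμsym, neg_neg]
      rw [hIcineg, Iic_toReal hatomless, hkey]
    rw [psiPlusIntegrand, hmub]
    have harith : 1 + (μ (Set.Ici s)).toReal - (1 - (μ (Set.Ici s)).toReal)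
        = 2 * (μ (Set.Ici s)).toReal := by ring
    rw [harith, ENNReal.ofReal_mul (by norm_num : (0:ℝ) ≤ 2),
      ENNReal.ofReal_toReal (measure_ne_top μ _), ENNReal.ofReal_ofNat]
    congr 1
    ring
  · have hGemp : ¬ (GinvSet μ n (Dmu μ n s)).Nonempty := fun h => hne (hNe.1 h)
    rw [psiPlusIntegrand, mubarGinv, if_neg hGemp]
    by_cases hn0 : n (Set.Ici s) = 0
    · rw [hn0]
      simp
    · have hμ0 : μ (Set.Ici s) = 0 := Dmu_empty_case hatomless hnfin hs hne hn0
      rw [hμ0]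
      simp

private lemma minus_integrand_eq [MeasureTheory.IsProbabilityMeasure μ]
    (hatomless : ∀ x : ℝ, μ {x} = 0)
    (hnfin : ∀ t : ℝ, 0 < t → n (Set.Ici t) < ⊤)
    (hμsym : MeasureTheory.Measure.map (fun x : ℝ => -x) μ = μ)
    (hnsym : MeasureTheory.Measure.map (fun x : ℝ => -x) n = n)
    {s : ℝ} (hs : s ≤ 0) :
    psiMinusIntegrand μ n s = (2 * μ (Set.Iic s) * n (Set.Iic s))⁻¹ := by
  have hs' : (0:ℝ) ≤ -s := neg_nonneg.2 hs
  have hG : Gmu μ n s = Dmu μ n (-s) := Gmu_eq_Dmu hμsym hnsym s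
  have hiic : μ (Set.Iic s) = μ (Set.Ici (-s)) := by
    rw [map_neg_Ici' hμsym (-s), neg_neg]
  have hIci_s : (μ (Set.Ici s)).toReal = 1 - (μ (Set.Ici (-s))).toReal := by
    rw [map_neg_Ici' hμsym s]
    rw [← neg_neg s]
    rw [neg_neg s]
    rw [show Set.Iic (-s) = Set.Iic (-s) from rfl]
    have := Iic_toReal (μ := μ) hatomless (-s)
    rw [this]
  by_cases hne : (DinvSet μ n (Dmu μ n (-s))).Nonempty
  · have hkey := measure_Ici_sInf hatomless hnfin hs' hne
    have hmub : mubarDinv μ n (Gmu μ n s) = (μ (Set.Ici (-s))).toReal := by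
      rw [hG, mubarDinv, if_pos hne, hkey]
    rw [psiMinusIntegrand, hmub, hIci_s]
    have harith : 1 + (μ (Set.Ici (-s))).toReal - (1 - (μ (Set.Ici (-s))).toReal)
        = 2 * (μ (Set.Ici (-s))).toReal := by ring
    rw [harith, ← hiic, ENNReal.ofReal_mul (by norm_num : (0:ℝ) ≤ 2),
      ENNReal.ofReal_toReal (measure_ne_top μ _), ENNReal.ofReal_ofNat]
    congr 1
    ring
  · have hmub : mubarDinv μ n (Gmu μ n s) = 0 := by
      rw [hG, mubarDinv, if_neg hne]
    rw [psiMinusIntegrand, hmub]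
    by_cases hn0 : n (Set.Iic s) = 0
    · rw [hn0]
      simp
    · have hn0' : n (Set.Ici (-s)) ≠ 0 := by
        rw [map_neg_Ici' hnsym (-s), neg_neg]
        exact hn0
      have hμ0 : μ (Set.Ici (-s)) = 0 := Dmu_empty_case hatomless hnfin hs' hne hn0'
      have hμiic : μ (Set.Iic s) = 0 := by rw [hiic, hμ0]
      rw [hμiic, hIci_s, hμ0]
      simp

private lemma reflect_integral
    (hμsym : MeasureTheory.Measure.map (fun x : ℝ => -x) μ = μ)
    (hnsym : MeasureTheory.Measure.map (fun x : ℝ => -x) n = n) (y : ℝ) :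
    (∫⁻ s in Set.Icc (-y) 0, (2 * μ (Set.Iic s) * n (Set.Iic s))⁻¹ ∂μ)
      = ∫⁻ t in Set.Icc (0:ℝ) y, (2 * μ (Set.Ici t) * n (Set.Ici t))⁻¹ ∂μ := by
  have hg : Measurable fun s : ℝ => (2 * μ (Set.Iic s) * n (Set.Iic s))⁻¹ := by
    have h1 : Monotone fun s : ℝ => μ (Set.Iic s) :=
      fun a b hab => measure_mono (Set.Iic_subset_Iic.2 hab)
    have h2 : Monotone fun s : ℝ => n (Set.Iic s) :=
      fun a b hab => measure_mono (Set.Iic_subset_Iic.2 hab)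
    exact ((measurable_const.mul h1.measurable).mul h2.measurable).inv
  have hpre : (fun t : ℝ => -t) ⁻¹' Set.Icc (-y) 0 = Set.Icc 0 y := by
    ext t
    simp only [Set.mem_preimage, Set.mem_Icc]
    constructor
    · rintro ⟨h1, h2⟩; exact ⟨neg_nonpos.1 h2, neg_le_neg_iff.1 h1⟩
    · rintro ⟨h1, h2⟩; exact ⟨neg_le_neg h2, neg_nonpos.2 h1⟩
  calc (∫⁻ s in Set.Icc (-y) 0, (2 * μ (Set.Iic s) * n (Set.Iic s))⁻¹ ∂μ)
      = ∫⁻ s in Set.Icc (-y) 0, (2 * μ (Set.Iic s) * n (Set.Iic s))⁻¹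
          ∂(MeasureTheory.Measure.map (fun t : ℝ => -t) μ) := by rw [hμsym]
    _ = ∫⁻ t in (fun t : ℝ => -t) ⁻¹' Set.Icc (-y) 0,
          (2 * μ (Set.Iic (-t)) * n (Set.Iic (-t)))⁻¹ ∂μ :=
        setLIntegral_map measurableSet_Icc hg measurable_neg
    _ = ∫⁻ t in Set.Icc (0:ℝ) y, (2 * μ (Set.Ici t) * n (Set.Ici t))⁻¹ ∂μ := by
        rw [hpre]
        exact lintegral_congr fun t => by
          rw [map_neg_Ici' hμsym t, map_neg_Ici' hnsym t]

end SymmetricAux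

/-- Symmetric case simplification: if `μ` and `n` are both invariant
under `x ↦ −x`, then `D_μ(∞) = G_μ(−∞)` holds automatically, and for every `y ≥ 0`
one has `ψ₊(y) = ψ₋(y) = ∫_{[0,y]} (2·μ̄(s)·n([s,∞)))⁻¹ dμ(s)`. -/
theorem symmetricCaseSimplification
    (μ n : MeasureTheory.Measure ℝ) [MeasureTheory.IsProbabilityMeasure μ]
    (hatomless : ∀ x : ℝ, μ {x} = 0)
    (hneg : 0 < μ (Set.Iio (0 : ℝ))) (hpos : 0 < μ (Set.Ioi (0 : ℝ)))
    (hnfin : ∀ s : ℝ, 0 < s → n (Set.Ici s) < ⊤ ∧ n (Set.Iic (-s)) < ⊤)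
    (hnsupp : ∀ x ∈ measSupport μ, 0 < n (Set.Iic x) ∧ 0 < n (Set.Ici x))
    (hμsym : MeasureTheory.Measure.map (fun x : ℝ => -x) μ = μ)
    (hnsym : MeasureTheory.Measure.map (fun x : ℝ => -x) n = n) :
    ((⨆ y : ℝ, Dmu μ n y) = (⨆ x : ℝ, Gmu μ n x)) ∧
    (∀ y : ℝ, 0 ≤ y →
      psiPlus μ n y = (∫⁻ s in Set.Icc (0 : ℝ) y, (2 * μ (Set.Ici s) * n (Set.Ici s))⁻¹ ∂μ) ∧
      psiMinus μ n y =
        ∫⁻ s in Set.Icc (0 : ℝ) y, (2 * μ (Set.Ici s) * n (Set.Ici s))⁻¹ ∂μ) := by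
  have hnfin' : ∀ t : ℝ, 0 < t → n (Set.Ici t) < ⊤ := fun t ht => (hnfin t ht).1
  constructor
  · apply le_antisymm
    · exact iSup_le fun y => le_iSup_of_le (-y)
        (by rw [Gmu_eq_Dmu hμsym hnsym, neg_neg])
    · exact iSup_le fun x => le_iSup_of_le (-x)
        (by rw [Gmu_eq_Dmu hμsym hnsym x])
  · intro y hy
    have hplus : psiPlus μ n y
        = ∫⁻ s in Set.Icc (0:ℝ) y, (2 * μ (Set.Ici s) * n (Set.Ici s))⁻¹ ∂μ := by
      unfold psiPlus
      apply setLIntegral_congr_fun measurableSet_Icc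
      exact fun s hs =>
        plus_integrand_eq hatomless hnfin' hμsym hnsym hs.1
    refine ⟨hplus, ?_⟩
    calc psiMinus μ n y
        = ∫⁻ s in Set.Icc (-y) (0:ℝ), (2 * μ (Set.Iic s) * n (Set.Iic s))⁻¹ ∂μ := by
          unfold psiMinus
          apply setLIntegral_congr_fun measurableSet_Icc
          exact fun s hs =>
            minus_integrand_eq hatomless hnfin' hμsym hnsym hs.2
      _ = _ := reflect_integral hμsym hnsym y
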